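/- Let (G,T) be a bipartite graft with color classes A and B, let F be a minimum join, and let X ⊆ A be a maximal bipartitic extreme set. Then there is no edge of G joining a vertex of D_X to a vertex of C_X. -/

import Mathlib

open scoped Classical

variable {V : Type*}

/-- The `F`-weight of a walk: number of edges outside `F` minus number of edges in `F`. -/
noncomputable def walkWeight {G : SimpleGraph V} (F : Set (Sym2 V)) {x y : V}
    (p : G.Walk x y) : ℤ :=
  ((p.edges.filter fun e => e ∉ F).length : ℤ) -
    ((p.edges.filter fun e => e ∈ F).length : ℤ)

/-- The `F`-distance between `x` and `y`: the minimum `F`-weight of a path between them. -/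
noncomputable def distF (G : SimpleGraph V) (F : Set (Sym2 V)) (x y : V) : ℤ :=
  sInf {w : ℤ | ∃ p : G.Walk x y, p.IsPath ∧ walkWeight F p = w}

/-- `F` is a join of the graft `(G, T)`. -/
def IsJoin (G : SimpleGraph V) (T : Set V) (F : Set (Sym2 V)) : Prop :=
  F ⊆ G.edgeSet ∧ ∀ v : V, v ∈ T ↔ Odd {e ∈ F | v ∈ e}.ncard

/-- `F` is a minimum join of the graft `(G, T)`. -/
def IsMinJoin (G : SimpleGraph V) (T : Set V) (F : Set (Sym2 V)) : Prop :=
  IsJoin G T F ∧ ∀ F' : Set (Sym2 V), IsJoin G T F' → F.ncard ≤ F'.ncard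

/-- `(G, T)` is a graft: every connected component contains an even number of vertices of `T`. -/
def IsGraft (G : SimpleGraph V) (T : Set V) : Prop :=
  ∀ v : V, Even {u | u ∈ T ∧ G.Reachable v u}.ncard

/-- `X` is an extreme set: `d_F(x, y) ≥ 0` for all `x, y ∈ X`. -/
def IsExtremeSet (G : SimpleGraph V) (F : Set (Sym2 V)) (X : Set V) : Prop :=
  ∀ x ∈ X, ∀ y ∈ X, 0 ≤ distF G F x y

/-- `G` is bipartite with vertex set `Vset` and color classes `A`, `B`. -/
def IsBipartitionOn (G : SimpleGraph V) (Vset A B : Set V) : Prop :=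
  A ∪ B = Vset ∧ Disjoint A B ∧
    ∀ v w : V, G.Adj v w → (v ∈ A ∧ w ∈ B) ∨ (v ∈ B ∧ w ∈ A)

/-- `X` is a maximal bipartitic extreme set with respect to color classes `A`, `B`. -/
def MaxBipExtreme (G : SimpleGraph V) (F : Set (Sym2 V)) (A B X : Set V) : Prop :=
  IsExtremeSet G F X ∧ (X ⊆ A ∨ X ⊆ B) ∧
    ∀ X' : Set V, IsExtremeSet G F X' → (X' ⊆ A ∨ X' ⊆ B) → X ⊆ X' → X' = X

/-- `D_X`: the vertices of `Vset ∖ X` at negative `F`-distance from `X`. -/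
def Dset (G : SimpleGraph V) (F : Set (Sym2 V)) (Vset X : Set V) : Set V :=
  {y | y ∈ Vset ∧ y ∉ X ∧ ∃ x ∈ X, distF G F x y < 0}

/-- `C_X = Vset ∖ X ∖ D_X`. -/
def Cset (G : SimpleGraph V) (F : Set (Sym2 V)) (Vset X : Set V) : Set V :=
  (Vset \ X) \ Dset G F Vset X

/-- `min_{x ∈ X} d_F(x, y)`. -/
noncomputable def minDistX (G : SimpleGraph V) (F : Set (Sym2 V)) (X : Set V) (y : V) : ℤ :=
  sInf {d : ℤ | ∃ x ∈ X, distF G F x y = d}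

/-- The graph `G − S` obtained by deleting the vertices of `S`. -/
def gDelete (G : SimpleGraph V) (S : Set V) : SimpleGraph V where
  Adj v w := G.Adj v w ∧ v ∉ S ∧ w ∉ S
  symm := ⟨fun v w ⟨h, hv, hw⟩ => ⟨h.symm, hw, hv⟩⟩
  loopless := ⟨fun v h => G.irrefl h.1⟩

/-- The subgraph of `G` induced by `S`. -/
def gRestrict (G : SimpleGraph V) (S : Set V) : SimpleGraph V where
  Adj v w := G.Adj v w ∧ v ∈ S ∧ w ∈ S
  symm := ⟨fun v w ⟨h, hv, hw⟩ => ⟨h.symm, hw, hv⟩⟩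
  loopless := ⟨fun v h => G.irrefl h.1⟩

/-- `C` is (the vertex set of) a connected component of `G − X`. -/
def IsCompOf (G : SimpleGraph V) (X C : Set V) : Prop :=
  ∃ v, v ∉ X ∧ C = {u | (gDelete G X).Reachable v u}

/-- `δ_G(C)`: the edges of `G` with exactly one end in `C`. -/
def edgeBoundary (G : SimpleGraph V) (C : Set V) : Set (Sym2 V) :=
  {e | e ∈ G.edgeSet ∧ ∃ u v : V, e = s(u, v) ∧ u ∈ C ∧ v ∉ C}

/-- `X` is an `F`-combic set of the graft `(G, T)`. -/
def IsCombic (G : SimpleGraph V) (T : Set V) (F : Set (Sym2 V)) (X : Set V) : Prop :=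
  (∀ u v : V, s(u, v) ∈ F → ¬(u ∈ X ∧ v ∈ X)) ∧
  (∀ C : Set V, IsCompOf G X C → Odd (C ∩ T).ncard →
      (edgeBoundary G C ∩ F).ncard = 1) ∧
  (∀ C : Set V, IsCompOf G X C → Even (C ∩ T).ncard →
      edgeBoundary G C ∩ F = ∅)

/-- The rootlization of `G` by the mount `X`, root `r` and attachment `s`. -/
def rootlize (G : SimpleGraph V) (X : Set V) (r s : V) : SimpleGraph V :=
  SimpleGraph.fromRel fun v w => G.Adj v w ∨ (v = r ∧ w = s) ∨ (v = s ∧ w ∈ X)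

/-- The initial component of `r`: the connected component of `r` in the subgraph
induced by the vertices at nonpositive `F`-distance from `r`. -/
def initComp (G : SimpleGraph V) (F : Set (Sym2 V)) (r : V) : Set V :=
  {x | (gRestrict G {y | distF G F r y ≤ 0}).Reachable r x}


section Aux

open SimpleGraph

variable {G : SimpleGraph V} {F : Set (Sym2 V)}

/-- The weight of a single edge. -/
noncomputable def edgeW (F : Set (Sym2 V)) (e : Sym2 V) : ℤ := if e ∈ F then -1 else 1

lemma edgeW_le_one (F : Set (Sym2 V)) (e : Sym2 V) : edgeW F e ≤ 1 := by
  unfold edgeW; split <;> omega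

lemma neg_one_le_edgeW (F : Set (Sym2 V)) (e : Sym2 V) : -1 ≤ edgeW F e := by
  unfold edgeW; split <;> omega

lemma walkWeight_eq_length_sub {x y : V} (p : G.Walk x y) :
    walkWeight F p = (p.length : ℤ) - 2 * ((p.edges.filter fun e => e ∈ F).length : ℤ) := by
  have h1 : (p.edges.filter fun e => e ∉ F) = p.edges.filter (fun e => ! decide (e ∈ F)) := by
    simp [decide_not]
  have h := List.length_eq_length_filter_add (l := p.edges) (fun e => decide (e ∈ F))
  unfold walkWeight
  rw [h1, ← p.length_edges, h]
  push_cast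
  ring

lemma walkWeight_append {x y z : V} (p : G.Walk x y) (q : G.Walk y z) :
    walkWeight F (p.append q) = walkWeight F p + walkWeight F q := by
  unfold walkWeight
  rw [Walk.edges_append, List.filter_append, List.filter_append, List.length_append,
    List.length_append]
  push_cast
  ring

lemma walkWeight_single {x y : V} (h : G.Adj x y) :
    walkWeight F (Walk.cons h Walk.nil) = edgeW F s(x, y) := by
  unfold walkWeight edgeW
  by_cases he : s(x, y) ∈ F <;> simp [he]

lemma walkWeight_concat {x y z : V} (p : G.Walk x y) (h : G.Adj y z) :
    walkWeight F (p.concat h) = walkWeight F p + edgeW F s(y, z) := by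
  rw [Walk.concat_eq_append, walkWeight_append, walkWeight_single]

lemma distF_bddBelow [Fintype V] (G : SimpleGraph V) (F : Set (Sym2 V)) (x y : V) :
    BddBelow {w : ℤ | ∃ p : G.Walk x y, p.IsPath ∧ walkWeight F p = w} := by
  refine ⟨-(Fintype.card V : ℤ), ?_⟩
  rintro w ⟨p, hp, rfl⟩
  have h1 : ((p.edges.filter fun e => e ∈ F).length : ℤ) ≤ (p.length : ℤ) := by
    exact_mod_cast le_trans (List.length_filter_le _ _) (le_of_eq p.length_edges)
  have h2 : (p.length : ℤ) < (Fintype.card V : ℤ) := by exact_mod_cast hp.length_lt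
  have h3 := walkWeight_eq_length_sub (F := F) p
  omega

lemma distF_le_weight [Fintype V] {x y : V} (p : G.Walk x y) (hp : p.IsPath) :
    distF G F x y ≤ walkWeight F p :=
  csInf_le (distF_bddBelow G F x y) ⟨p, hp, rfl⟩

lemma distF_self (G : SimpleGraph V) (F : Set (Sym2 V)) (x : V) : distF G F x x = 0 := by
  have h : {w : ℤ | ∃ p : G.Walk x x, p.IsPath ∧ walkWeight F p = w} = {0} := by
    ext w
    constructor
    · rintro ⟨p, hp, rfl⟩
      rw [Walk.isPath_iff_eq_nil.mp hp]
      simp [walkWeight]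
    · rintro rfl
      exact ⟨Walk.nil, by simp, by simp [walkWeight]⟩
  rw [distF, h, csInf_singleton]

lemma distF_symm (G : SimpleGraph V) (F : Set (Sym2 V)) (x y : V) :
    distF G F x y = distF G F y x := by
  have key : ∀ a b : V,
      {w : ℤ | ∃ p : G.Walk a b, p.IsPath ∧ walkWeight F p = w} ⊆
        {w : ℤ | ∃ p : G.Walk b a, p.IsPath ∧ walkWeight F p = w} := by
    rintro a b w ⟨p, hp, rfl⟩
    refine ⟨p.reverse, hp.reverse, ?_⟩
    unfold walkWeight
    rw [Walk.edges_reverse, List.filter_reverse, List.filter_reverse, List.length_reverse,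
      List.length_reverse]
  rw [distF, distF, Set.Subset.antisymm (key x y) (key y x)]

lemma exists_path_of_distF_neg [Fintype V] {x y : V} (h : distF G F x y < 0) :
    ∃ p : G.Walk x y, p.IsPath ∧ walkWeight F p = distF G F x y := by
  by_cases hne : {w : ℤ | ∃ p : G.Walk x y, p.IsPath ∧ walkWeight F p = w}.Nonempty
  · exact Int.csInf_mem hne (distF_bddBelow G F x y)
  · exfalso
    rw [Set.not_nonempty_iff_eq_empty] at hne
    rw [distF, hne, Int.csInf_empty] at h
    omega

lemma length_parity_of_bip {A B : Set V} (hbip : IsBipartitionOn G Set.univ A B)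
    {u v : V} (p : G.Walk u v) : Even p.length ↔ (u ∈ A ↔ v ∈ A) := by
  induction p with
  | nil => simp
  | @cons a c d h q ih =>
    have huw : a ∈ A ↔ ¬ c ∈ A := by
      rcases hbip.2.2 _ _ h with ⟨hu, hw⟩ | ⟨hu, hw⟩
      · exact iff_of_true hu (Set.disjoint_right.mp hbip.2.1 hw)
      · exact iff_of_false (Set.disjoint_right.mp hbip.2.1 hu) (not_not_intro hw)
    rw [SimpleGraph.Walk.length_cons, Nat.even_add_one, ih]
    tauto

lemma even_weight_iff_even_length {x y : V} (p : G.Walk x y) :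
    Even (walkWeight F p) ↔ Even p.length := by
  have h := walkWeight_eq_length_sub (F := F) p
  constructor
  · rintro ⟨m, hm⟩
    have : (p.length : ℤ) = (m + ((p.edges.filter fun e => e ∈ F).length : ℤ)) +
        (m + ((p.edges.filter fun e => e ∈ F).length : ℤ)) := by omega
    have h2 : Even (p.length : ℤ) := ⟨_, this⟩
    exact_mod_cast h2
  · rintro ⟨m, hm⟩
    exact ⟨(m : ℤ) - ((p.edges.filter fun e => e ∈ F).length : ℤ), by omega⟩

lemma endpoint_mem_A_of_weight_even {A B : Set V} (hbip : IsBipartitionOn G Set.univ A B)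
    {x z : V} (p : G.Walk x z) (hx : x ∈ A) (hw : Even (walkWeight F p)) : z ∈ A :=
  ((length_parity_of_bip hbip p).mp ((even_weight_iff_even_length p).mp hw)).mp hx

lemma ncard_filter_list {α : Type*} (l : List α) (hl : l.Nodup) (P : α → Prop) [DecidablePred P] :
    {e | e ∈ l ∧ P e}.ncard = (l.filter fun e => P e).length := by
  have h1 : {e | e ∈ l ∧ P e} = ↑(l.filter fun e => P e).toFinset := by
    ext e
    simp [List.mem_filter]
  rw [h1, Set.ncard_coe_finset, List.toFinset_card_of_nodup (hl.filter _)]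

lemma path_edge_count {a b : V} (v : V) (p : G.Walk a b) :
    p.IsPath →
    ((p.edges.filter fun e => v ∈ e).length : ℤ) =
      (if v ∈ p.support then 2 else 0) - (if v = a then 1 else 0) - (if v = b then 1 else 0) := by
  induction p with
  | nil =>
    intro _
    simp only [Walk.edges_nil, List.filter_nil, List.length_nil, Walk.support_nil,
      List.mem_singleton, Nat.cast_zero]
    split_ifs <;> omega
  | @cons a c b h q ih =>
    intro hp
    rw [Walk.cons_isPath_iff] at hp
    obtain ⟨hq, hnas⟩ := hp
    have ihq := ih hq
    have hac : a ≠ c := h.ne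
    have hcs : c ∈ q.support := q.start_mem_support
    have hbs : b ∈ q.support := q.end_mem_support
    have hab : a ≠ b := fun hh => hnas (hh ▸ hbs)
    rw [Walk.support_cons, Walk.edges_cons]
    by_cases hm : v ∈ s(a, c)
    · have hcons : ((s(a, c) :: q.edges).filter fun e => v ∈ e)
          = s(a, c) :: (q.edges.filter fun e => v ∈ e) := by
        simp [List.filter_cons, hm]
      rw [hcons, List.length_cons]
      push_cast
      rw [ihq]
      rcases Sym2.mem_iff.mp hm with rfl | rfl
      · have h2 : v ∉ q.support := hnas
        have hmem : (v ∈ v :: q.support) := List.mem_cons_self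
        simp only [h2, if_false, hmem, if_true, hac, hab, if_neg hac, if_neg hab,
          if_pos rfl]
        ring
      · have hmem : (v ∈ a :: q.support) := List.mem_cons_of_mem a hcs
        have hva : v ≠ a := fun hh => hac hh.symm
        simp only [hcs, if_true, hmem, if_neg hva, if_pos rfl]
        by_cases hvb : v = b <;> simp only [hvb, if_true, if_false] <;> ring
    · have hva : v ≠ a := fun hh => hm (hh ▸ Sym2.mem_mk_left a c)
      have hvc : v ≠ c := fun hh => hm (hh ▸ Sym2.mem_mk_right a c)
      have hcons : ((s(a, c) :: q.edges).filter fun e => v ∈ e)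
          = q.edges.filter fun e => v ∈ e := by
        simp [List.filter_cons, hm]
      rw [hcons, ihq]
      have h2 : (v ∈ a :: q.support) ↔ v ∈ q.support := by
        simp [List.mem_cons, hva]
      by_cases hvs : v ∈ q.support
      · simp only [hvs, if_true, h2.mpr hvs, if_neg hva, if_neg hvc]
      · have : v ∉ a :: q.support := fun hh => hvs (h2.mp hh)
        simp only [hvs, if_false, this, if_neg hva, if_neg hvc]

lemma odd_ncard_symmDiff {α : Type*} {Xs Ys : Set α} (hX : Xs.Finite) (hY : Ys.Finite)
    (hE : Even Ys.ncard) : Odd (symmDiff Xs Ys).ncard ↔ Odd Xs.ncard := by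
  have h1 : symmDiff Xs Ys = (Xs \ Ys) ∪ (Ys \ Xs) := Set.symmDiff_def Xs Ys
  have h2 : (symmDiff Xs Ys).ncard = (Xs \ Ys).ncard + (Ys \ Xs).ncard := by
    rw [h1]
    exact Set.ncard_union_eq disjoint_sdiff_sdiff hX.diff hY.diff
  have hd3 : Disjoint (Xs \ Ys) (Xs ∩ Ys) := by
    rw [Set.disjoint_left]
    rintro e ⟨_, h2'⟩ ⟨_, h4'⟩
    exact h2' h4'
  have hd4 : Disjoint (Ys \ Xs) (Ys ∩ Xs) := by
    rw [Set.disjoint_left]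
    rintro e ⟨_, h2'⟩ ⟨_, h4'⟩
    exact h2' h4'
  have h3 : (Xs \ Ys).ncard + (Xs ∩ Ys).ncard = Xs.ncard := by
    rw [← Set.ncard_union_eq hd3 hX.diff (hX.inter_of_left _), Set.diff_union_inter]
  have h4 : (Ys \ Xs).ncard + (Ys ∩ Xs).ncard = Ys.ncard := by
    rw [← Set.ncard_union_eq hd4 hY.diff (hY.inter_of_left _), Set.diff_union_inter]
  have h5 : (Xs ∩ Ys).ncard = (Ys ∩ Xs).ncard := by rw [Set.inter_comm]
  rw [Nat.odd_iff, Nat.odd_iff]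
  rw [Nat.even_iff] at hE
  omega

lemma edges_eq_of_mem_edges {z y : V} (Q : G.Walk z y) (hQ : Q.IsPath) (hzy : z ≠ y)
    (h : s(y, z) ∈ Q.edges) : Q.edges = [s(z, y)] := by
  cases Q with
  | nil => simp at h
  | @cons _ c _ h' q =>
    rw [Walk.edges_cons] at h ⊢
    rw [Walk.cons_isPath_iff] at hQ
    rcases List.mem_cons.mp h with heq | hmem
    · have hyc : y = c := by
        rcases Sym2.eq_iff.mp heq with ⟨h1, _⟩ | ⟨h1, _⟩
        · exact absurd h1.symm hzy
        · exact h1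
      subst hyc
      have hnil : q = Walk.nil := Walk.isPath_iff_eq_nil.mp hQ.1
      rw [hnil]
      simp
    · exact absurd (q.snd_mem_support_of_mem_edges hmem) hQ.2

lemma minjoin_cycle [Fintype V] {T : Set V} (hF : IsMinJoin G T F) {z y : V}
    (Q : G.Walk z y) (hQ : Q.IsPath) (hzy : z ≠ y) (hadj : G.Adj y z)
    (hne : s(y, z) ∉ Q.edges) :
    0 ≤ walkWeight F Q + edgeW F s(y, z) := by
  classical
  set s : Sym2 V := s(y, z) with hs
  set Ecyc : Set (Sym2 V) := insert s {e | e ∈ Q.edges} with hEcyc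
  set F' : Set (Sym2 V) := symmDiff F Ecyc with hF'
  have hQnodup : Q.edges.Nodup := hQ.edges_nodup
  have hfin : ∀ S : Set (Sym2 V), S.Finite := fun S => Set.toFinite S
  -- per-vertex evenness of the cycle
  have hEven : ∀ v : V, Even {e | e ∈ Ecyc ∧ v ∈ e}.ncard := by
    intro v
    have hsplit : {e | e ∈ Ecyc ∧ v ∈ e} =
        if v ∈ s then insert s {e | e ∈ Q.edges ∧ v ∈ e} else {e | e ∈ Q.edges ∧ v ∈ e} := by
      split_ifs with hv
      · ext e
        simp only [hEcyc, Set.mem_insert_iff, Set.mem_setOf_eq]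
        constructor
        · rintro ⟨(rfl | he), hv'⟩
          · exact Or.inl rfl
          · exact Or.inr ⟨he, hv'⟩
        · rintro (rfl | ⟨he, hv'⟩)
          · exact ⟨Or.inl rfl, hv⟩
          · exact ⟨Or.inr he, hv'⟩
      · ext e
        simp only [hEcyc, Set.mem_insert_iff, Set.mem_setOf_eq]
        constructor
        · rintro ⟨(rfl | he), hv'⟩
          · exact absurd hv' hv
          · exact ⟨he, hv'⟩
        · rintro ⟨he, hv'⟩
          exact ⟨Or.inr he, hv'⟩
    have hcount := path_edge_count v Q hQ
    have hncard : {e | e ∈ Q.edges ∧ v ∈ e}.ncard = (Q.edges.filter fun e => v ∈ e).length :=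
      ncard_filter_list _ hQnodup _
    have hzs : z ∈ Q.support := Q.start_mem_support
    have hys : y ∈ Q.support := Q.end_mem_support
    have hsnot : s ∉ {e | e ∈ Q.edges ∧ v ∈ e} := fun hh => hne hh.1
    rw [hsplit]
    by_cases hv : v ∈ s
    · simp only [hv, if_true]
      rw [Set.ncard_insert_of_notMem hsnot (hfin _), hncard]
      rw [Nat.even_iff]
      rcases Sym2.mem_iff.mp hv with rfl | rfl
      · -- v = y
        have hvy : v ∈ Q.support := hys
        simp only [hvy, if_true] at hcount
        by_cases hvz : v = z
        · exact absurd hvz.symm hzy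
        · simp only [hvz, if_false, if_true] at hcount
          omega
      · -- v = z
        have hvz : v ∈ Q.support := hzs
        simp only [hvz, if_true] at hcount
        by_cases hvy : v = y
        · exact absurd hvy hzy
        · simp only [hvy, if_false, if_true] at hcount
          omega
    · simp only [hv, if_false]
      rw [hncard, Nat.even_iff]
      have hvy : v ≠ y := fun hh => hv (hh ▸ Sym2.mem_mk_left y z)
      have hvz : v ≠ z := fun hh => hv (hh ▸ Sym2.mem_mk_right y z)
      simp only [hvy, hvz, if_false] at hcount
      by_cases hvs : v ∈ Q.support <;> simp only [hvs, if_true, if_false] at hcount <;> omega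
  -- F' is a join
  have hEcycE : Ecyc ⊆ G.edgeSet := by
    rintro e he
    rcases Set.mem_insert_iff.mp he with rfl | he'
    · exact hadj
    · exact Q.edges_subset_edgeSet he'
  have hJoin : IsJoin G T F' := by
    constructor
    · intro e he
      rcases Set.mem_symmDiff.mp he with ⟨heF, -⟩ | ⟨heE, -⟩
      · exact hF.1.1 heF
      · exact hEcycE heE
    · intro v
      rw [hF.1.2 v]
      have hsplit : {e | e ∈ F' ∧ v ∈ e} =
          symmDiff {e | e ∈ F ∧ v ∈ e} {e | e ∈ Ecyc ∧ v ∈ e} := by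
        ext e
        simp only [Set.mem_setOf_eq, Set.mem_symmDiff, hF']
        tauto
      rw [hsplit, odd_ncard_symmDiff (hfin _) (hfin _) (hEven v)]
  -- cardinality comparison
  have hcard := hF.2 F' hJoin
  have h6 : F'.ncard = (F \ Ecyc).ncard + (Ecyc \ F).ncard := by
    rw [hF', Set.symmDiff_def]
    exact Set.ncard_union_eq disjoint_sdiff_sdiff (hfin _) (hfin _)
  have hd7 : Disjoint (F \ Ecyc) (F ∩ Ecyc) := by
    rw [Set.disjoint_left]
    rintro e ⟨_, h2'⟩ ⟨_, h4'⟩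
    exact h2' h4'
  have h7 : (F \ Ecyc).ncard + (F ∩ Ecyc).ncard = F.ncard := by
    rw [← Set.ncard_union_eq hd7 (hfin _) (hfin _), Set.diff_union_inter]
  have hkey : (F ∩ Ecyc).ncard ≤ (Ecyc \ F).ncard := by omega
  -- weight computation
  have hn1 : {e | e ∈ Q.edges ∧ e ∉ F}.ncard = (Q.edges.filter fun e => e ∉ F).length :=
    ncard_filter_list _ hQnodup _
  have hn2 : {e | e ∈ Q.edges ∧ e ∈ F}.ncard = (Q.edges.filter fun e => e ∈ F).length :=
    ncard_filter_list _ hQnodup _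
  have hwQ : walkWeight F Q =
      ({e | e ∈ Q.edges ∧ e ∉ F}.ncard : ℤ) - ({e | e ∈ Q.edges ∧ e ∈ F}.ncard : ℤ) := by
    rw [hn1, hn2]; rfl
  by_cases hsF : s ∈ F
  · have hA : Ecyc \ F = {e | e ∈ Q.edges ∧ e ∉ F} := by
      ext e
      simp only [Set.mem_diff, hEcyc, Set.mem_insert_iff, Set.mem_setOf_eq]
      constructor
      · rintro ⟨rfl | he, hef⟩
        · exact absurd hsF hef
        · exact ⟨he, hef⟩
      · rintro ⟨he, hef⟩
        exact ⟨Or.inr he, hef⟩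
    have hB : F ∩ Ecyc = insert s {e | e ∈ Q.edges ∧ e ∈ F} := by
      ext e
      simp only [Set.mem_inter_iff, hEcyc, Set.mem_insert_iff, Set.mem_setOf_eq]
      constructor
      · rintro ⟨hef, rfl | he⟩
        · exact Or.inl rfl
        · exact Or.inr ⟨he, hef⟩
      · rintro (rfl | ⟨he, hef⟩)
        · exact ⟨hsF, Or.inl rfl⟩
        · exact ⟨hef, Or.inr he⟩
    have hsnot : s ∉ {e | e ∈ Q.edges ∧ e ∈ F} := fun hh => hne hh.1
    rw [hA, hB, Set.ncard_insert_of_notMem hsnot (hfin _)] at hkey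
    have hew : edgeW F s = -1 := by unfold edgeW; simp [hsF]
    rw [hwQ, hew]
    omega
  · have hA : Ecyc \ F = insert s {e | e ∈ Q.edges ∧ e ∉ F} := by
      ext e
      simp only [Set.mem_diff, hEcyc, Set.mem_insert_iff, Set.mem_setOf_eq]
      constructor
      · rintro ⟨rfl | he, hef⟩
        · exact Or.inl rfl
        · exact Or.inr ⟨he, hef⟩
      · rintro (rfl | ⟨he, hef⟩)
        · exact ⟨Or.inl rfl, hsF⟩
        · exact ⟨Or.inr he, hef⟩
    have hB : F ∩ Ecyc = {e | e ∈ Q.edges ∧ e ∈ F} := by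
      ext e
      simp only [Set.mem_inter_iff, hEcyc, Set.mem_insert_iff, Set.mem_setOf_eq]
      constructor
      · rintro ⟨hef, rfl | he⟩
        · exact absurd hef hsF
        · exact ⟨he, hef⟩
      · rintro ⟨he, hef⟩
        exact ⟨hef, Or.inr he⟩
    have hsnot : s ∉ {e | e ∈ Q.edges ∧ e ∉ F} := fun hh => hne hh.1
    rw [hA, hB, Set.ncard_insert_of_notMem hsnot (hfin _)] at hkey
    have hew : edgeW F s = 1 := by unfold edgeW; simp [hsF]
    rw [hwQ, hew]
    omega

lemma mem_of_maxbip [Fintype V] {A B X : Set V} (hX : MaxBipExtreme G F A B X)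
    (hXA : X ⊆ A) {z : V} (hzA : z ∈ A) (hz : ∀ x ∈ X, 0 ≤ distF G F x z) : z ∈ X := by
  have hext : IsExtremeSet G F (X ∪ {z}) := by
    rintro x (hx | rfl) y (hy | rfl)
    · exact hX.1 x hx y hy
    · exact hz x hx
    · rw [distF_symm]
      exact hz y hy
    · rw [distF_self]
  have heq := hX.2.2 (X ∪ {z}) hext
    (Or.inl (Set.union_subset hXA (by simpa using hzA))) Set.subset_union_left
  rw [← heq]
  exact Or.inr rfl

end Aux

/-- For a maximal bipartitic extreme set `X ⊆ A` of a bipartite graft,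
no edge of `G` joins a vertex of `D_X` to a vertex of `C_X`. -/
theorem stmt_3 [Fintype V] (G : SimpleGraph V) (T A B X : Set V) (F : Set (Sym2 V))
    (hGT : IsGraft G T) (hbip : IsBipartitionOn G Set.univ A B)
    (hF : IsMinJoin G T F) (hXA : X ⊆ A) (hX : MaxBipExtreme G F A B X) :
    ∀ y ∈ Dset G F Set.univ X, ∀ z ∈ Cset G F Set.univ X, ¬ G.Adj y z := by
  rintro y ⟨-, hyX, x, hxX, hxy⟩ z hz hadj
  obtain ⟨⟨-, hzX⟩, hzD⟩ := hz
  have hzC : ∀ x' ∈ X, 0 ≤ distF G F x' z := by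
    intro x' hx'
    by_contra hlt
    exact hzD ⟨Set.mem_univ z, hzX, x', hx', lt_of_not_ge hlt⟩
  have hzy : z ≠ y := by
    rintro rfl
    exact hzD ⟨Set.mem_univ z, hyX, x, hxX, hxy⟩
  obtain ⟨P, hP, hPw⟩ := exists_path_of_distF_neg hxy
  have hPneg : walkWeight F P ≤ -1 := by rw [hPw]; omega
  have conclude : ∀ R : G.Walk x z, R.IsPath → walkWeight F R = 0 → False := by
    intro R hR hRw
    have hzA : z ∈ A := endpoint_mem_A_of_weight_even hbip R (hXA hxX)
      (by rw [hRw]; exact Even.zero)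
    exact hzX (mem_of_maxbip hX hXA hzA hzC)
  by_cases hzP : z ∈ P.support
  · set P1 := P.takeUntil z hzP with hP1def
    set P2 := P.dropUntil z hzP with hP2def
    have hPsplit : P1.append P2 = P := P.take_spec hzP
    have hwsplit : walkWeight F P1 + walkWeight F P2 = walkWeight F P := by
      rw [← walkWeight_append, hPsplit]
    have hP1p : SimpleGraph.Walk.IsPath P1 := hP.takeUntil hzP
    have hP2p : SimpleGraph.Walk.IsPath P2 := hP.dropUntil hzP
    have h1 : 0 ≤ walkWeight F P1 := le_trans (hzC x hxX) (distF_le_weight P1 hP1p)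
    have h2 : -1 ≤ walkWeight F P2 := by
      by_cases hmem : s(y, z) ∈ P2.edges
      · have hedges : P2.edges = [s(z, y)] := edges_eq_of_mem_edges P2 hP2p hzy hmem
        unfold walkWeight
        rw [hedges]
        by_cases hf : s(z, y) ∈ F <;> simp [hf]
      · have hcyc := minjoin_cycle hF P2 hP2p hzy hadj hmem
        have hew := edgeW_le_one F s(y, z)
        omega
    have h3 : walkWeight F P1 = 0 := by omega
    exact conclude P1 hP1p h3
  · set R := P.concat hadj with hRdef
    have hRp : SimpleGraph.Walk.IsPath R := by
      rw [SimpleGraph.Walk.isPath_def, hRdef, SimpleGraph.Walk.support_concat,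
        List.nodup_append']
      refine ⟨hP.support_nodup, List.nodup_singleton z, ?_⟩
      intro a ha hb
      rw [List.mem_singleton] at hb
      subst hb
      exact hzP ha
    have hRw : walkWeight F R = walkWeight F P + edgeW F s(y, z) := walkWeight_concat P hadj
    have hew1 := edgeW_le_one F s(y, z)
    have hle : walkWeight F R ≤ 0 := by omega
    have hge : 0 ≤ walkWeight F R := le_trans (hzC x hxX) (distF_le_weight R hRp)
    exact conclude R hRp (le_antisymm hle hge)
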